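/- (Mini-batching with replacement.) Suppose in each iteration a mini-batch index b is sampled independently and uniformly from {1,…,B} and the update β ← β − (Bα/n)X_bᵀ(X_bβ − y_b) is applied, starting from β_0 ∈ ℝ^p. Let β̂_k denote the mean iterate after k epochs (i.e. Bk iterations), averaged over the i.i.d. sampling of the mini-batches. Then for all k ≥ 0, β̂_k − β* = (I − αW)^{Bk}(β_0 − β*) + (1/n)[I − (I − αW)^{Bk}]W†Xᵀη; i.e. sampling with replacement matches the full-batch error dynamics up to a time change by the factor B. -/

import Mathlib

open Matrix Finset

noncomputable section

namespace MiniBatchGD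

variable {p B m : ℕ}

/-- The product `∏_{j < τ⁻¹(b)} (I - α W_{τ(j)})`, with factors ordered by decreasing
position `j` (the factor with largest `j` leftmost); the empty product is `I`. -/
def prodBefore (α : ℝ) (W : Fin B → Matrix (Fin p) (Fin p) ℝ)
    (τ : Equiv.Perm (Fin B)) (b : Fin B) : Matrix (Fin p) (Fin p) ℝ :=
  ((((List.finRange B).filter (fun j => j < τ.symm b)).reverse).map
      (fun j => (1 : Matrix (Fin p) (Fin p) ℝ) - α • W (τ j))).prod

/-- The product `∏_{j > τ⁻¹(b)} (I - α W_{τ(j)})`, with factors ordered by decreasing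
position `j`; the empty product is `I`. -/
def prodAfter (α : ℝ) (W : Fin B → Matrix (Fin p) (Fin p) ℝ)
    (τ : Equiv.Perm (Fin B)) (b : Fin B) : Matrix (Fin p) (Fin p) ℝ :=
  ((((List.finRange B).filter (fun j => τ.symm b < j)).reverse).map
      (fun j => (1 : Matrix (Fin p) (Fin p) ℝ) - α • W (τ j))).prod

/-- The whole-epoch product `∏_{b=1}^{B} (I - α W_{τ(b)})`, factors ordered by
decreasing position. -/
def prodAll (α : ℝ) (W : Fin B → Matrix (Fin p) (Fin p) ℝ)
    (τ : Equiv.Perm (Fin B)) : Matrix (Fin p) (Fin p) ℝ :=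
  (((List.finRange B).reverse).map
      (fun j => (1 : Matrix (Fin p) (Fin p) ℝ) - α • W (τ j))).prod

/-- `Π_b := (1/B!) ∑_{τ ∈ S_B} ∏_{j < τ⁻¹(b)} (I - α W_{τ(j)})`. -/
def Pib (α : ℝ) (W : Fin B → Matrix (Fin p) (Fin p) ℝ) (b : Fin B) :
    Matrix (Fin p) (Fin p) ℝ :=
  ((B.factorial : ℝ))⁻¹ • ∑ τ : Equiv.Perm (Fin B), prodBefore α W τ b

/-- The `b`-th mini-batch of rows of `X`. -/
def batch (X : Matrix (Fin B × Fin m) (Fin p) ℝ) (b : Fin B) : Matrix (Fin m) (Fin p) ℝ :=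
  Matrix.of fun i j => X (b, i) j

/-- The sample covariance `W_b = (B/n) X_bᵀ X_b` of the `b`-th mini-batch (`n = B m`). -/
def Wb (X : Matrix (Fin B × Fin m) (Fin p) ℝ) (b : Fin B) : Matrix (Fin p) (Fin p) ℝ :=
  ((B : ℝ) / ((B * m : ℕ) : ℝ)) • ((batch X b)ᵀ * batch X b)

/-- The modified feature matrix `X̃`, whose `b`-th block of rows is `X̃_b = X_b Π_b`. -/
def Xtilde (α : ℝ) (X : Matrix (Fin B × Fin m) (Fin p) ℝ) :
    Matrix (Fin B × Fin m) (Fin p) ℝ :=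
  Matrix.of fun bi j => (batch X bi.1 * Pib α (Wb X) bi.1) bi.2 j

/-- The sample cross-covariance matrix `Z = (1/n) X̃ᵀ X`. -/
def Zmat (α : ℝ) (X : Matrix (Fin B × Fin m) (Fin p) ℝ) : Matrix (Fin p) (Fin p) ℝ :=
  (((B * m : ℕ) : ℝ))⁻¹ • ((Xtilde α X)ᵀ * X)

/-- One mini-batch gradient step with step size `α` on batch `b`:
`β ← β - (Bα/n) X_bᵀ (X_b β - y_b)`. -/
def step (α : ℝ) (X : Matrix (Fin B × Fin m) (Fin p) ℝ) (y : Fin B × Fin m → ℝ)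
    (b : Fin B) (β : Fin p → ℝ) : Fin p → ℝ :=
  β - ((B : ℝ) * α / ((B * m : ℕ) : ℝ)) •
    ((batch X b)ᵀ *ᵥ (batch X b *ᵥ β - fun i => y (b, i)))

/-- One epoch of mini-batch gradient descent using the mini-batches in the order
given by the permutation `τ`. -/
def epoch (α : ℝ) (X : Matrix (Fin B × Fin m) (Fin p) ℝ) (y : Fin B × Fin m → ℝ)
    (τ : Equiv.Perm (Fin B)) (β : Fin p → ℝ) : Fin p → ℝ :=
  (List.finRange B).foldl (fun β j => step α X y (τ j) β) β

/-- The mean iterate `β̄_k` of mini-batch gradient descent with random reshuffling: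
since each epoch map is affine in `β` and the permutations of distinct epochs are
independent and uniform, the mean iterate satisfies
`β̄_k = (1/B!) ∑_{τ ∈ S_B} epoch_τ (β̄_{k-1})`. -/
def meanIter (α : ℝ) (X : Matrix (Fin B × Fin m) (Fin p) ℝ) (y : Fin B × Fin m → ℝ)
    (β₀ : Fin p → ℝ) : ℕ → Fin p → ℝ
  | 0 => β₀
  | k + 1 => ((B.factorial : ℝ))⁻¹ •
      ∑ τ : Equiv.Perm (Fin B), epoch α X y τ (meanIter α X y β₀ k)

/-- `Ad` is the Moore–Penrose pseudoinverse of `A`. -/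
def IsMoorePenrose {n₁ n₂ : Type*} [Fintype n₁] [Fintype n₂]
    (A : Matrix n₁ n₂ ℝ) (Ad : Matrix n₂ n₁ ℝ) : Prop :=
  A * Ad * A = A ∧ Ad * A * Ad = Ad ∧ (A * Ad)ᵀ = A * Ad ∧ (Ad * A)ᵀ = Ad * A

end MiniBatchGD

open MiniBatchGD

/-- Mini-batching with replacement, Remark `rmk:with_replacement`. If in each
iteration a mini-batch index is sampled independently and uniformly from `{1,…,B}` and the
update `β ← β − (Bα/n)X_bᵀ(X_bβ − y_b)` is applied, then the mean iterate `β̂_k` after `k`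
epochs (i.e. `Bk` iterations) — which, by independence and affineness of the updates, is
obtained by iterating the averaged update map `β ↦ (1/B)∑_b (β − (Bα/n)X_bᵀ(X_bβ − y_b))`
for `Bk` steps — satisfies
`β̂_k − β* = (I − αW)^{Bk}(β₀ − β*) + (1/n)[I − (I − αW)^{Bk}]W†Xᵀη`;
i.e. sampling with replacement matches the full-batch error dynamics up to a time change by
the factor `B`. -/
theorem with_replacement_dynamics {p B m : ℕ} (hB : 1 ≤ B) (hm : 1 ≤ m) (hp : 1 ≤ p)
    (α : ℝ) (hα : 0 ≤ α) (X : Matrix (Fin B × Fin m) (Fin p) ℝ)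
    (βstar β₀ : Fin p → ℝ) (η : Fin B × Fin m → ℝ)
    (y : Fin B × Fin m → ℝ) (hy : y = X *ᵥ βstar + η)
    (W : Matrix (Fin p) (Fin p) ℝ) (hW : W = (((B * m : ℕ) : ℝ))⁻¹ • (Xᵀ * X))
    (Wd : Matrix (Fin p) (Fin p) ℝ) (hWd : IsMoorePenrose W Wd) :
    ∀ k : ℕ,
      (fun β => ((B : ℝ))⁻¹ • ∑ b : Fin B, step α X y b β)^[B * k] β₀ - βstar =
        ((1 - α • W) ^ (B * k)) *ᵥ (β₀ - βstar) +
          (((B * m : ℕ) : ℝ))⁻¹ •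
            (((1 - (1 - α • W) ^ (B * k)) * Wd) *ᵥ (Xᵀ *ᵥ η)) := by
  have hc : (((B * m : ℕ) : ℝ)) ≠ 0 := by
    have : 0 < B * m := Nat.mul_pos hB hm
    exact_mod_cast this.ne'
  have hBne : (B : ℝ) ≠ 0 := by
    have : 0 < B := hB
    exact_mod_cast this.ne'
  set c : ℝ := (((B * m : ℕ) : ℝ)) with hcdef
  set A : Matrix (Fin p) (Fin p) ℝ := 1 - α • W with hA
  set g : Fin p → ℝ := Xᵀ *ᵥ η with hg
  -- key pseudoinverse fact : (W * Wd) * Xᵀ = Xᵀ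
  have hXX : Xᵀ * X = c • W := by
    rw [hW, smul_smul, mul_inv_cancel₀ hc, one_smul]
  have h1 : (W * Wd) * (Xᵀ * X) = Xᵀ * X := by
    rw [hXX, Matrix.mul_smul, hWd.1]
  have h2 : (Xᵀ * X) * (W * Wd) = Xᵀ * X := by
    have h := congrArg Matrix.transpose h1
    have hXXsym : (Xᵀ * X)ᵀ = Xᵀ * X := by
      rw [Matrix.transpose_mul, Matrix.transpose_transpose]
    rw [Matrix.transpose_mul, hXXsym, hWd.2.2.1] at h
    exact h
  have hkey : (W * Wd) * Xᵀ = Xᵀ := by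
    have hsym : (W * Wd)ᵀ = W * Wd := hWd.2.2.1
    have h1' : W * (Wd * (Xᵀ * X)) = Xᵀ * X := by rw [← Matrix.mul_assoc]; exact h1
    have h2' : Xᵀ * (X * (W * Wd)) = Xᵀ * X := by rw [← Matrix.mul_assoc]; exact h2
    have hexp : (Xᵀ - (W * Wd) * Xᵀ) * (Xᵀ - (W * Wd) * Xᵀ)ᵀ = 0 := by
      rw [Matrix.transpose_sub, Matrix.transpose_mul, Matrix.transpose_transpose, hsym]
      simp only [Matrix.sub_mul, Matrix.mul_sub, Matrix.mul_assoc]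
      rw [h2', h1']
      abel
    have hz : Xᵀ - (W * Wd) * Xᵀ = 0 := by
      rw [← Matrix.conjTranspose_eq_transpose_of_trivial] at hexp
      exact Matrix.self_mul_conjTranspose_eq_zero.mp hexp
    exact (sub_eq_zero.mp hz).symm
  have hWWg : (W * Wd) *ᵥ g = g := by
    rw [hg, Matrix.mulVec_mulVec, hkey]
  -- the averaged step map is affine : F β = β - (α/c) • (Xᵀ *ᵥ (X *ᵥ β - y))
  have hsum : ∀ β : Fin p → ℝ,
      (∑ b : Fin B, (fun i => (batch X b)ᵀ *ᵥ (batch X b *ᵥ β - fun i => y (b, i))) b)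
        = Xᵀ *ᵥ (X *ᵥ β - y) := by
    intro β
    funext j
    simp only [Finset.sum_apply, Matrix.mulVec, dotProduct, Matrix.transpose_apply,
      batch, Matrix.of_apply, Pi.sub_apply, Fintype.sum_prod_type]
  have hF : ∀ β : Fin p → ℝ,
      ((B : ℝ))⁻¹ • ∑ b : Fin B, step α X y b β
        = β - (α / c) • (Xᵀ *ᵥ (X *ᵥ β - y)) := by
    intro β
    have : ∑ b : Fin B, step α X y b β
        = (B : ℕ) • β - ((B : ℝ) * α / c) • (Xᵀ *ᵥ (X *ᵥ β - y)) := by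
      rw [← hsum β]
      simp only [step, Finset.sum_sub_distrib, Finset.sum_const, Finset.card_univ,
        Fintype.card_fin, Finset.smul_sum]
      rfl
    rw [this, smul_sub, smul_smul]
    congr 1
    · rw [← Nat.cast_smul_eq_nsmul ℝ, smul_smul, inv_mul_cancel₀ hBne, one_smul]
    · congr 1
      field_simp
  -- error dynamics of one averaged step
  have hstep : ∀ β : Fin p → ℝ,
      (((B : ℝ))⁻¹ • ∑ b : Fin B, step α X y b β) - βstar
        = A *ᵥ (β - βstar) + (α / c) • g := by
    intro β
    rw [hF β, hy]
    have hv : X *ᵥ β - (X *ᵥ βstar + η) = X *ᵥ (β - βstar) - η := by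
      rw [Matrix.mulVec_sub]; abel
    rw [hv, Matrix.mulVec_sub, Matrix.mulVec_mulVec, hXX]
    have hWv : (c • W) *ᵥ (β - βstar) = c • (W *ᵥ (β - βstar)) :=
      Matrix.smul_mulVec c W (β - βstar)
    rw [hWv, smul_sub, smul_smul, div_mul_comm, div_self hc, one_mul]
    rw [hA, Matrix.sub_mulVec, Matrix.one_mulVec, Matrix.smul_mulVec]
    rw [← hg]
    abel
  -- main induction
  suffices h : ∀ N : ℕ,
      (fun β => ((B : ℝ))⁻¹ • ∑ b : Fin B, step α X y b β)^[N] β₀ - βstar =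
        (A ^ N) *ᵥ (β₀ - βstar) + c⁻¹ • (((1 - A ^ N) * Wd) *ᵥ g) by
    intro k; exact h (B * k)
  intro N
  induction N with
  | zero =>
    simp
  | succ N ih =>
    rw [Function.iterate_succ_apply']
    rw [hstep _, ih]
    rw [Matrix.mulVec_add, Matrix.mulVec_mulVec, ← pow_succ']
    rw [Matrix.mulVec_smul, Matrix.mulVec_mulVec]
    have hmat : (1 - A ^ (N + 1)) * Wd = A * ((1 - A ^ N) * Wd) + α • (W * Wd) := by
      have hA1 : A * (1 - A ^ N) = A - A ^ (N + 1) := by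
        rw [mul_sub, mul_one, ← pow_succ']
      rw [← Matrix.mul_assoc, hA1, hA]
      have : α • (W * Wd) = (α • W) * Wd := by rw [Matrix.smul_mul]
      rw [this, ← add_mul]
      congr 1
      abel
    rw [hmat, Matrix.add_mulVec]
    have hsm : (α • (W * Wd)) *ᵥ g = α • g := by
      rw [Matrix.smul_mulVec, hWWg]
    rw [hsm, smul_add, smul_smul]
    have : c⁻¹ * α = α / c := by ring
    rw [this]
    abel
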